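/- For the discretized Laplacian noise with PMF p_θ(k) = ((1 − e^{−Δ/λ})/2)·e^{(μ−k)/λ} for k ≥ μ and p_θ(k) = ((e^{Δ/λ} − 1)/2)·e^{(k−μ)/λ} for k ≤ μ − Δ (k ∈ Δℤ, λ > 0, μ ∈ Δℤ), the adjacent probability ratio satisfies p_θ(k − m₀)/p_θ(k) ≤ e^{(m+Δ)/λ} for all k ∈ Δℤ and all m₀ ∈ [−m, m] ∩ Δℤ. -/

import Mathlib

/-- Discretized Laplacian PMF on the lattice `Δℤ` (index `k : ℤ` stands for the point `k·Δ`),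
with location `μ·Δ` and scale `λ`. -/
noncomputable def lapPMF (Δ lam : ℝ) (μ : ℤ) (k : ℤ) : ℝ :=
  if μ ≤ k then ((1 - Real.exp (-Δ / lam)) / 2) * Real.exp ((Δ * μ - Δ * k) / lam)
  else ((Real.exp (Δ / lam) - 1) / 2) * Real.exp ((Δ * k - Δ * μ) / lam)

lemma lap_aux (lam : ℝ) (hlam : 0 < lam) {s t : ℝ} (h : s ≤ t) :
    Real.exp (s / lam) ≤ Real.exp (t / lam) := by
  gcongr

/-- For the discretized Laplacian noise, the adjacent probability ratio satisfies
`p_θ(k - m₀) ≤ e^{(m+Δ)/λ} · p_θ(k)` for all `k ∈ Δℤ` and all shifts `m₀ ∈ [-m, m] ∩ Δℤ`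
(adjacency `m = M·Δ`). -/
theorem laplace_ratio_bound
    (Δ lam : ℝ) (hΔ : 0 < Δ) (hlam : 0 < lam)
    (μ : ℤ) (M : ℤ) (hM : 0 < M) :
    ∀ k j : ℤ, |j| ≤ M →
      lapPMF Δ lam μ (k - j) ≤ Real.exp (((M : ℝ) * Δ + Δ) / lam) * lapPMF Δ lam μ k := by
  intro k j hj
  obtain ⟨hj1, hj2⟩ := abs_le.1 hj
  have hjR1 : (-M : ℝ) ≤ j := by exact_mod_cast hj1
  have hjR2 : (j : ℝ) ≤ M := by exact_mod_cast hj2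
  have hMR : (0 : ℝ) < M := by exact_mod_cast hM
  have hA : 0 < (1 - Real.exp (-Δ / lam)) / 2 := by
    have : Real.exp (-Δ / lam) < Real.exp 0 := by
      apply Real.exp_lt_exp.2
      apply div_neg_of_neg_of_pos (by linarith) hlam
    rw [Real.exp_zero] at this
    linarith
  have hBA : (Real.exp (Δ / lam) - 1) / 2
      = ((1 - Real.exp (-Δ / lam)) / 2) * Real.exp (Δ / lam) := by
    have h := Real.exp_add (-Δ / lam) (Δ / lam)
    have h2 : -Δ / lam + Δ / lam = 0 := by ring
    rw [h2, Real.exp_zero] at h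
    nlinarith [Real.exp_pos (Δ / lam)]
  have hB : 0 < (Real.exp (Δ / lam) - 1) / 2 := by
    rw [hBA]; positivity
  unfold lapPMF
  by_cases h1 : μ ≤ (k - j : ℤ) <;> by_cases h2 : μ ≤ k <;> simp only [h1, h2, if_true, if_false, if_pos, if_neg, not_false_iff]
  · -- both ≥ μ
    have hcast : (Δ * ↑μ - Δ * ↑(k - j)) ≤ ((M : ℝ) * Δ + Δ) + (Δ * μ - Δ * k) := by
      push_cast
      nlinarith
    calc (1 - Real.exp (-Δ / lam)) / 2 * Real.exp ((Δ * ↑μ - Δ * ↑(k - j)) / lam)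
        ≤ (1 - Real.exp (-Δ / lam)) / 2 *
            Real.exp ((((M : ℝ) * Δ + Δ) + (Δ * μ - Δ * k)) / lam) := by
          exact mul_le_mul_of_nonneg_left (lap_aux lam hlam hcast) hA.le
      _ = Real.exp (((M : ℝ) * Δ + Δ) / lam) *
            ((1 - Real.exp (-Δ / lam)) / 2 * Real.exp ((Δ * ↑μ - Δ * ↑k) / lam)) := by
          rw [add_div, Real.exp_add]; ring
  · -- k - j ≥ μ, k < μ
    rw [hBA]
    have hkR : (k : ℝ) + 1 ≤ μ := by exact_mod_cast (not_le.1 h2)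
    have hkjR : (μ : ℝ) ≤ k - j := by exact_mod_cast h1
    have hcast : (Δ * ↑μ - Δ * ↑(k - j)) ≤
        (((M : ℝ) * Δ + Δ) + Δ) + (Δ * k - Δ * μ) := by
      push_cast
      nlinarith
    calc (1 - Real.exp (-Δ / lam)) / 2 * Real.exp ((Δ * ↑μ - Δ * ↑(k - j)) / lam)
        ≤ (1 - Real.exp (-Δ / lam)) / 2 *
            Real.exp (((((M : ℝ) * Δ + Δ) + Δ) + (Δ * k - Δ * μ)) / lam) := by
          exact mul_le_mul_of_nonneg_left (lap_aux lam hlam hcast) hA.le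
      _ = Real.exp (((M : ℝ) * Δ + Δ) / lam) *
            ((1 - Real.exp (-Δ / lam)) / 2 * Real.exp (Δ / lam) *
              Real.exp ((Δ * ↑k - Δ * ↑μ) / lam)) := by
          rw [add_div, add_div, Real.exp_add, Real.exp_add]; ring
  · -- k - j < μ, k ≥ μ
    rw [hBA]
    have hkR : (μ : ℝ) ≤ k := by exact_mod_cast h2
    have hkjR : ((k : ℝ) - j) + 1 ≤ μ := by exact_mod_cast (not_le.1 h1)
    have hcast : Δ / lam + (Δ * ↑(k - j) - Δ * ↑μ) / lam ≤
        (((M : ℝ) * Δ + Δ) + (Δ * μ - Δ * k)) / lam := by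
      rw [← add_div]
      refine div_le_div_of_nonneg_right ?_ hlam.le
      push_cast
      nlinarith
    calc (1 - Real.exp (-Δ / lam)) / 2 * Real.exp (Δ / lam) *
          Real.exp ((Δ * ↑(k - j) - Δ * ↑μ) / lam)
        = (1 - Real.exp (-Δ / lam)) / 2 *
            Real.exp (Δ / lam + (Δ * ↑(k - j) - Δ * ↑μ) / lam) := by
          rw [Real.exp_add]; ring
      _ ≤ (1 - Real.exp (-Δ / lam)) / 2 *
            Real.exp ((((M : ℝ) * Δ + Δ) + (Δ * μ - Δ * k)) / lam) := by
          exact mul_le_mul_of_nonneg_left (Real.exp_le_exp.2 hcast) hA.le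
      _ = Real.exp (((M : ℝ) * Δ + Δ) / lam) *
            ((1 - Real.exp (-Δ / lam)) / 2 * Real.exp ((Δ * ↑μ - Δ * ↑k) / lam)) := by
          rw [add_div, Real.exp_add]; ring
  · -- both < μ
    have hcast : (Δ * ↑(k - j) - Δ * ↑μ) ≤ ((M : ℝ) * Δ + Δ) + (Δ * k - Δ * μ) := by
      push_cast
      nlinarith
    calc (Real.exp (Δ / lam) - 1) / 2 * Real.exp ((Δ * ↑(k - j) - Δ * ↑μ) / lam)
        ≤ (Real.exp (Δ / lam) - 1) / 2 *
            Real.exp ((((M : ℝ) * Δ + Δ) + (Δ * k - Δ * μ)) / lam) := by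
          exact mul_le_mul_of_nonneg_left (lap_aux lam hlam hcast) hB.le
      _ = Real.exp (((M : ℝ) * Δ + Δ) / lam) *
            ((Real.exp (Δ / lam) - 1) / 2 * Real.exp ((Δ * ↑k - Δ * ↑μ) / lam)) := by
          rw [add_div, Real.exp_add]; ring
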